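/- Let μ, λ ∈ ℂ with μ ≠ 0 and exp(λT) = μ, and let φ₁, φ₂ ∈ ℂⁿ satisfy Φ(T)·φ₁ = μ·φ₁ and Φ(T)·φ₂ = μ·φ₂ + φ₁ (a length-2 Jordan chain of the monodromy matrix). Define v₁(t) := exp(−λt)·(Φ(t)·φ₁) and v₂(t) := exp(−λt)·(Φ(t)·φ₂) − (t/(Tμ))·v₁(t). Then v₂(0) = φ₂, v₂ satisfies v₂′(t) = (A(t) − λ·1)·v₂(t) − (1/(Tμ))·v₁(t) for all t, and v₂ is T-periodic: v₂(t+T) = v₂(t) for all t. -/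

import Mathlib

attribute [local instance] Matrix.normedAddCommGroup Matrix.normedSpace

open Matrix

-- entrywise sup norm is "almost" submultiplicative
lemma aux_norm_mul_le {n : ℕ} (A B : Matrix (Fin n) (Fin n) ℂ) :
    ‖A * B‖ ≤ n * ‖A‖ * ‖B‖ := by
  rw [Matrix.norm_le_iff (by positivity)]
  intro i j
  calc ‖(A * B) i j‖ = ‖∑ k, A i k * B k j‖ := by rw [Matrix.mul_apply]
    _ ≤ ∑ k, ‖A i k * B k j‖ := norm_sum_le _ _
    _ ≤ ∑ _k : Fin n, ‖A‖ * ‖B‖ := by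
        refine Finset.sum_le_sum fun k _ => ?_
        rw [norm_mul]
        exact mul_le_mul (Matrix.norm_entry_le_entrywise_sup_norm A)
          (Matrix.norm_entry_le_entrywise_sup_norm B) (norm_nonneg _) (norm_nonneg _)
    _ = n * ‖A‖ * ‖B‖ := by
        rw [Finset.sum_const, Finset.card_univ, Fintype.card_fin, nsmul_eq_mul]; ring

-- derivative of a linear image of Φ
lemma aux_mulVec_deriv {n : ℕ} (Φ : ℝ → Matrix (Fin n) (Fin n) ℂ)
    (D : Matrix (Fin n) (Fin n) ℂ) (φ : Fin n → ℂ) (t : ℝ)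
    (h : HasDerivAt Φ D t) :
    HasDerivAt (fun s => (Φ s).mulVec φ) (D.mulVec φ) t := by
  let L : Matrix (Fin n) (Fin n) ℂ →ₗ[ℂ] (Fin n → ℂ) :=
    { toFun := fun M => M.mulVec φ
      map_add' := fun M N => Matrix.add_mulVec M N φ
      map_smul' := fun c M => Matrix.smul_mulVec c M φ }
  exact ((L.toContinuousLinearMap.restrictScalars ℝ).hasFDerivAt.comp_hasDerivAt t h)

lemma aux_mulRight_deriv {n : ℕ} (Φ : ℝ → Matrix (Fin n) (Fin n) ℂ)
    (D B : Matrix (Fin n) (Fin n) ℂ) (t : ℝ) (h : HasDerivAt Φ D t) :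
    HasDerivAt (fun s => Φ s * B) (D * B) t := by
  let L : Matrix (Fin n) (Fin n) ℂ →ₗ[ℂ] Matrix (Fin n) (Fin n) ℂ :=
    { toFun := fun M => M * B
      map_add' := fun M N => add_mul M N B
      map_smul' := fun c M => smul_mul_assoc c M B }
  exact ((L.toContinuousLinearMap.restrictScalars ℝ).hasFDerivAt.comp_hasDerivAt t h)

lemma aux_semigroup (T : ℝ) (hT : 0 < T) (n : ℕ)
    (A Φ : ℝ → Matrix (Fin n) (Fin n) ℂ)
    (hA : Continuous A) (hAper : ∀ t : ℝ, A (t + T) = A t)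
    (hΦ0 : Φ 0 = 1) (hΦ : ∀ t : ℝ, HasDerivAt Φ (A t * Φ t) t) (t : ℝ) :
    Φ (t + T) = Φ t * Φ T := by
  obtain ⟨C, hC⟩ := (isCompact_Icc (a := (0:ℝ)) (b := T)).exists_bound_of_continuousOn
    hA.continuousOn
  have hC0 : 0 ≤ C := le_trans (norm_nonneg _) (hC 0 ⟨le_refl 0, hT.le⟩)
  have hCg : ∀ s : ℝ, ‖A s‖ ≤ C := by
    intro s
    have hper : Function.Periodic A T := hAper
    obtain ⟨y, hy, hyA⟩ := hper.exists_mem_Ico₀ hT s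
    rw [hyA]
    exact hC y ⟨hy.1, hy.2.le⟩
  set K : NNReal := ⟨n * C, by positivity⟩ with hK
  have hlip : ∀ s : ℝ, LipschitzWith K (fun M : Matrix (Fin n) (Fin n) ℂ => A s * M) := by
    intro s
    apply LipschitzWith.of_dist_le_mul
    intro M N
    rw [dist_eq_norm, ← mul_sub, dist_eq_norm]
    calc ‖A s * (M - N)‖ ≤ n * ‖A s‖ * ‖M - N‖ := aux_norm_mul_le _ _
      _ ≤ (K : ℝ) * ‖M - N‖ := by
          apply mul_le_mul_of_nonneg_right _ (norm_nonneg _)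
          have : (K : ℝ) = n * C := rfl
          rw [this]
          exact mul_le_mul_of_nonneg_left (hCg s) (by positivity)
  set b : ℝ := |t| + 1 with hb
  have ht : t ∈ Set.Ioo (-b) b := by
    constructor
    · nlinarith [neg_abs_le t, abs_nonneg t]
    · nlinarith [le_abs_self t]
  have h0 : (0:ℝ) ∈ Set.Ioo (-b) b := by
    constructor <;> nlinarith [abs_nonneg t]
  have heq := ODE_solution_unique_of_mem_Ioo
    (v := fun s M => A s * M) (s := fun _ => Set.univ)
    (hv := fun s _ => (hlip s).lipschitzOnWith)
    (f := fun s => Φ (s + T)) (g := fun s => Φ s * Φ T)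
    h0
    (fun s _ => ⟨by
      have := (hΦ (s + T)).comp_add_const s T
      rwa [hAper s] at this, trivial⟩)
    (fun s _ => ⟨by
      have := aux_mulRight_deriv Φ _ (Φ T) s (hΦ s)
      rwa [mul_assoc] at this, trivial⟩)
    (by simp [hΦ0])
  exact heq ht

lemma aux_sol_deriv {n : ℕ} (A Φ : ℝ → Matrix (Fin n) (Fin n) ℂ)
    (hΦ : ∀ t : ℝ, HasDerivAt Φ (A t * Φ t) t) (lam : ℂ) (φ : Fin n → ℂ) (t : ℝ) :
    HasDerivAt (fun s : ℝ => Complex.exp (-(lam * s)) • (Φ s).mulVec φ)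
      ((A t).mulVec (Complex.exp (-(lam * t)) • (Φ t).mulVec φ)
        - lam • (Complex.exp (-(lam * t)) • (Φ t).mulVec φ)) t := by
  have h1 : HasDerivAt (fun s : ℝ => (s : ℂ)) 1 t := by
    simpa using (hasDerivAt_id t).ofReal_comp
  have h3 : HasDerivAt (fun s : ℝ => Complex.exp (-(lam * s)))
      (Complex.exp (-(lam * t)) * -(lam * 1)) t := ((h1.const_mul lam).neg).cexp
  have hw := aux_mulVec_deriv Φ _ φ t (hΦ t)
  have := h3.smul hw
  refine this.congr_deriv ?_
  rw [Matrix.mulVec_smul, Matrix.mulVec_mulVec]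
  module

theorem floquet_generalized_eigenvector
    (T : ℝ) (hT : 0 < T) (n : ℕ) (hn : 1 ≤ n)
    (A Φ : ℝ → Matrix (Fin n) (Fin n) ℂ)
    (hA : Continuous A) (hAper : ∀ t : ℝ, A (t + T) = A t)
    (hΦ0 : Φ 0 = 1) (hΦ : ∀ t : ℝ, HasDerivAt Φ (A t * Φ t) t)
    (μ lam : ℂ) (hμ0 : μ ≠ 0) (hμ : Complex.exp (lam * T) = μ)
    (φ₁ φ₂ : Fin n → ℂ)
    (hφ₁ : (Φ T).mulVec φ₁ = μ • φ₁)
    (hφ₂ : (Φ T).mulVec φ₂ = μ • φ₂ + φ₁)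
    (v₁ v₂ : ℝ → Fin n → ℂ)
    (hv₁ : ∀ t : ℝ, v₁ t = Complex.exp (-(lam * t)) • (Φ t).mulVec φ₁)
    (hv₂ : ∀ t : ℝ, v₂ t = Complex.exp (-(lam * t)) • (Φ t).mulVec φ₂
      - ((t : ℂ) / ((T : ℂ) * μ)) • v₁ t) :
    v₂ 0 = φ₂
    ∧ (∀ t : ℝ, HasDerivAt v₂
        ((A t - lam • (1 : Matrix (Fin n) (Fin n) ℂ)).mulVec (v₂ t)
          - (1 / ((T : ℂ) * μ)) • v₁ t) t)
    ∧ ∀ t : ℝ, v₂ (t + T) = v₂ t := by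
  have hTμ : (T : ℂ) * μ ≠ 0 := mul_ne_zero (by exact_mod_cast hT.ne') hμ0
  have hv₁f : v₁ = fun s : ℝ => Complex.exp (-(lam * s)) • (Φ s).mulVec φ₁ := funext hv₁
  have hv₂f : v₂ = fun s : ℝ => Complex.exp (-(lam * s)) • (Φ s).mulVec φ₂
      - ((s : ℂ) / ((T : ℂ) * μ)) • v₁ s := funext hv₂
  -- initial value
  refine ⟨?_, ?_, ?_⟩
  · rw [hv₂ 0, hv₁ 0]
    simp [hΦ0]
  · -- derivative
    intro t
    have h1 : HasDerivAt (fun s : ℝ => (s : ℂ)) 1 t := by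
      simpa using (hasDerivAt_id t).ofReal_comp
    have hc2 : HasDerivAt (fun s : ℝ => (s : ℂ) / ((T : ℂ) * μ)) (1 / ((T : ℂ) * μ)) t :=
      h1.div_const _
    have hd1 : HasDerivAt v₁ ((A t).mulVec (v₁ t) - lam • v₁ t) t := by
      rw [hv₁f]
      have := aux_sol_deriv A Φ hΦ lam φ₁ t
      simpa [← hv₁ t] using this
    have hd2 := aux_sol_deriv A Φ hΦ lam φ₂ t
    have htot := hd2.sub (hc2.smul hd1)
    rw [hv₂ t, hv₂f]
    refine htot.congr_deriv ?_
    simp only [Matrix.sub_mulVec, Matrix.smul_mulVec, Matrix.one_mulVec,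
      Matrix.mulVec_sub, Matrix.mulVec_smul]
    module
  · -- periodicity
    intro t
    have hsemi := aux_semigroup T hT n A Φ hA hAper hΦ0 hΦ t
    have hexp : Complex.exp (-(lam * ((t : ℝ) + T : ℝ)))
        = Complex.exp (-(lam * t)) * μ⁻¹ := by
      push_cast
      rw [mul_add, neg_add, Complex.exp_add]
      congr 1
      rw [Complex.exp_neg, hμ]
    have hv₁per : v₁ (t + T) = v₁ t := by
      rw [hv₁ (t + T), hv₁ t, hexp, hsemi, ← Matrix.mulVec_mulVec, hφ₁, Matrix.mulVec_smul,
        smul_smul]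
      congr 1
      field_simp
    rw [hv₂ (t + T), hv₂ t, hexp, hsemi, ← Matrix.mulVec_mulVec, hφ₂, hv₁per]
    have hco : (((t : ℝ) + T : ℝ) : ℂ) / ((T : ℂ) * μ) = (t : ℂ) / ((T : ℂ) * μ) + μ⁻¹ := by
      push_cast
      have hT0 : (T : ℂ) ≠ 0 := by exact_mod_cast hT.ne'
      field_simp
    rw [hco, hv₁ t]
    rw [Matrix.mulVec_add, Matrix.mulVec_smul]
    match_scalars <;> field_simp <;> ring
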